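/- Assume P ≠ ∅ and every arc of G is used by at least one cycle cover. Let W ∈ ℝ^{(m+1)×(m+1−α)} be a matrix whose columns form a basis for R = Nul([−1_n, U; −1_n, V]). Then there exists a positive definite matrix Z ∈ S^{m+1−α} (Z ≻ 0) such that diag(W Z W^T) = W Z W^T e_0 and e_0^T W Z W^T e_0 = 1; that is, the facially reduced relaxation (SDP_{S1}) has a Slater feasible point. -/

import Mathlib

open Matrix

noncomputable section



private lemma telescope_sum {M : Type*} [AddCommGroup M] (f : ℕ → M) {i j : ℕ} (h : i ≤ j) :
    ∑ s ∈ Finset.Ico i j, (f (s+1) - f s) = f j - f i := by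
  induction j with
  | zero => interval_cases i; simp
  | succ j ih =>
    rcases Nat.lt_or_ge i (j+1) with hlt | hge
    · have hij : i ≤ j := by omega
      rw [Finset.sum_Ico_succ_top hij, ih hij]; abel
    · have : i = j + 1 := by omega
      subst this; simp

private lemma exists_cycle_vector (n m : ℕ) (src tgt : Fin m → Fin n)
    (U V : Matrix (Fin n) (Fin m) ℝ)
    (hU : ∀ i e, U i e = if src e = i then 1 else 0)
    (hV : ∀ i e, V i e = if tgt e = i then 1 else 0)
    (F : Set (Fin m)) (e₀ : Fin m) (he₀ : e₀ ∈ F)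
    (hGp : ∀ e ∈ F, ∃ f, f ∈ F ∧ f ≠ e ∧ tgt f = tgt e)
    (hHp : ∀ e ∈ F, ∃ f, f ∈ F ∧ f ≠ e ∧ src f = src e) :
    ∃ χ : Fin m → ℝ, χ ≠ 0 ∧ (∀ e, χ e ≠ 0 → e ∈ F) ∧
      U.mulVec χ = 0 ∧ V.mulVec χ = 0 := by
  classical
  -- choice functions
  set G : Fin m → Fin m := fun e => if h : e ∈ F then (hGp e h).choose else e with hGdef
  have hG : ∀ e ∈ F, G e ∈ F ∧ G e ≠ e ∧ tgt (G e) = tgt e := by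
    intro e he
    simp only [hGdef, dif_pos he]
    exact (hGp e he).choose_spec
  set H : Fin m → Fin m := fun e => if h : e ∈ F then (hHp e h).choose else e with hHdef
  have hH : ∀ e ∈ F, H e ∈ F ∧ H e ≠ e ∧ src (H e) = src e := by
    intro e he
    simp only [hHdef, dif_pos he]
    exact (hHp e he).choose_spec
  set E : ℕ → Fin m := fun s => (fun e => H (G e))^[s] e₀ with hEdef
  have hEF : ∀ s, E s ∈ F := by
    intro s
    induction s with
    | zero => exact he₀
    | succ s ih =>
      have : E (s+1) = H (G (E s)) := by
        simp only [hEdef, Function.iterate_succ_apply']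
      rw [this]
      exact (hH _ ((hG _ ih).1)).1
  have hEsucc : ∀ s, E (s+1) = H (G (E s)) := by
    intro s; simp only [hEdef, Function.iterate_succ_apply']
  set v : ℕ → Fin n := fun s => tgt (E s) with hvdef
  -- basic relations
  have htgtG : ∀ s, tgt (G (E s)) = v s := fun s => (hG _ (hEF s)).2.2
  have hsrcE : ∀ s, src (E (s+1)) = src (G (E s)) := by
    intro s; rw [hEsucc s]; exact (hH _ ((hG _ (hEF s)).1)).2.2
  -- pigeonhole: find repetition of v
  have hJ : ∃ j, ∃ i, i < j ∧ v i = v j := by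
    have hn : 0 < n := (v 0).pos
    have hcard : (Finset.univ : Finset (Fin n)).card < (Finset.range (n+1)).card := by
      simp
    obtain ⟨x, -, y, -, hxy, hvxy⟩ :=
      Finset.exists_ne_map_eq_of_card_lt_of_maps_to hcard
        (fun a (_ : a ∈ Finset.range (n+1)) => Finset.mem_univ (v a))
    rcases Nat.lt_or_ge x y with h | h
    · exact ⟨y, x, h, hvxy⟩
    · exact ⟨x, y, by omega, hvxy.symm⟩
  set j := Nat.find hJ with hjdef
  obtain ⟨i, hij, hvij⟩ := Nat.find_spec hJ
  have hmin : ∀ p q, p < q → q < j → v p ≠ v q := by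
    intro p q hpq hqj hvpq
    exact Nat.find_min hJ hqj ⟨p, hpq, hvpq⟩
  -- the cycle vector
  set χ : Fin m → ℝ :=
    ∑ s ∈ Finset.Ico i j, (Pi.single (E (s+1)) (1:ℝ) - Pi.single (G (E s)) (1:ℝ)) with hχdef
  have hχapp : ∀ e, χ e = ∑ s ∈ Finset.Ico i j,
      ((Pi.single (E (s+1)) (1:ℝ) : Fin m → ℝ) e - (Pi.single (G (E s)) (1:ℝ) : Fin m → ℝ) e) := by
    intro e
    simp only [hχdef, Finset.sum_apply, Pi.sub_apply]
  refine ⟨χ, ?_, ?_, ?_, ?_⟩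
  · -- χ ≠ 0 : evaluate at E (i+1)
    intro h0
    have hval : χ (E (i+1)) = 1 := by
      rw [hχapp]
      have hA : ∀ s ∈ Finset.Ico i j,
          ((Pi.single (E (s+1)) (1:ℝ) : Fin m → ℝ) (E (i+1)) - (Pi.single (G (E s)) (1:ℝ) : Fin m → ℝ) (E (i+1)))
          = if s = i then 1 else 0 := by
        intro s hs
        rw [Finset.mem_Ico] at hs
        have hB : (Pi.single (G (E s)) (1:ℝ) : Fin m → ℝ) (E (i+1)) = 0 := by
          apply Pi.single_eq_of_ne
          intro heq  -- E (i+1) = G (E s)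
          have htg : v (i+1) = v s := by
            have := htgtG s
            rw [← heq] at this
            simpa [hvdef] using this
          rcases Nat.lt_or_ge (i+1) j with hij1 | hij1
          · -- i+1 < j
            rcases Nat.lt_trichotomy s (i+1) with hlt | heqs | hgt
            · have hsi : s = i := by omega
              subst hsi
              exact hmin s (s+1) (by omega) hij1 htg.symm
            · -- s = i+1 : G (E s) = E s contradiction
              subst heqs
              exact (hG _ (hEF (i+1))).2.1 heq.symm
            · exact hmin (i+1) s hgt hs.2 htg
          · -- i+1 = j, so s = i
            have hsi : s = i := by omega
            have hji : j = i + 1 := by omega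
            subst hsi
            -- E (s+1) = H (G (E s)) ≠ G (E s)
            rw [hEsucc s] at heq
            exact (hH _ ((hG _ (hEF s)).1)).2.1 heq
        rw [hB, sub_zero]
        rcases eq_or_ne s i with rfl | hsne
        · simp
        · rw [if_neg hsne]
          apply Pi.single_eq_of_ne
          intro heq  -- E (i+1) = E (s+1)
          have htg : v (i+1) = v (s+1) := by simp [hvdef, heq]
          rcases Nat.lt_or_ge (s+1) j with hs1 | hs1
          · have : i + 1 < s + 1 := by omega
            exact hmin (i+1) (s+1) this hs1 htg
          · -- s+1 = j
            have hsj : s + 1 = j := by omega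
            have : v (s+1) = v i := by rw [hsj]; exact hvij.symm
            rw [this] at htg
            have hiij : i < i + 1 := by omega
            have : i + 1 < j := by omega
            exact hmin i (i+1) hiij this htg.symm
      rw [Finset.sum_congr rfl hA]
      simp [Finset.sum_ite_eq' (Finset.Ico i j), Finset.mem_Ico, hij]
      exact hij
    rw [h0] at hval
    simp at hval
  · -- support
    intro e he
    by_contra heF
    apply he
    rw [hχapp]
    apply Finset.sum_eq_zero
    intro s _
    have h1 : (Pi.single (E (s+1)) (1:ℝ) : Fin m → ℝ) e = 0 :=
      Pi.single_eq_of_ne (fun h => heF (by rw [h]; exact hEF (s+1))) 1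
    have h2 : (Pi.single (G (E s)) (1:ℝ) : Fin m → ℝ) e = 0 :=
      Pi.single_eq_of_ne (fun h => heF (by rw [h]; exact (hG _ (hEF s)).1)) 1
    rw [h1, h2, sub_zero]
  · -- U χ = 0
    have hsingle : ∀ e, U.mulVec (Pi.single e (1:ℝ)) = Pi.single (src e) 1 := by
      intro e
      rw [Matrix.mulVec_single]
      funext i
      show U i e * 1 = _
      rw [hU i e, mul_one, Pi.single_apply]
      by_cases h : src e = i
      · rw [if_pos h, if_pos h.symm]
      · rw [if_neg h, if_neg (Ne.symm h)]
    have : U.mulVec χ = ∑ s ∈ Finset.Ico i j,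
        (U.mulVec (Pi.single (E (s+1)) (1:ℝ)) - U.mulVec (Pi.single (G (E s)) (1:ℝ))) := by
      rw [hχdef, ← Matrix.mulVecLin_apply, map_sum]
      simp only [map_sub, Matrix.mulVecLin_apply]
    rw [this]
    apply Finset.sum_eq_zero
    intro s _
    rw [hsingle, hsingle, hsrcE s, sub_self]
  · -- V χ = 0
    have hsingle : ∀ e, V.mulVec (Pi.single e (1:ℝ)) = Pi.single (tgt e) 1 := by
      intro e
      rw [Matrix.mulVec_single]
      funext i
      show V i e * 1 = _
      rw [hV i e, mul_one, Pi.single_apply]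
      by_cases h : tgt e = i
      · rw [if_pos h, if_pos h.symm]
      · rw [if_neg h, if_neg (Ne.symm h)]
    have hVχ : V.mulVec χ = ∑ s ∈ Finset.Ico i j,
        ((fun s => (Pi.single (v s) (1:ℝ) : Fin n → ℝ)) (s+1) - (fun s => (Pi.single (v s) (1:ℝ) : Fin n → ℝ)) s) := by
      rw [hχdef, ← Matrix.mulVecLin_apply, map_sum]
      simp only [map_sub, Matrix.mulVecLin_apply]
      apply Finset.sum_congr rfl
      intro s _
      rw [hsingle, hsingle, htgtG s]
    rw [hVχ, telescope_sum (fun s => (Pi.single (v s) (1:ℝ) : Fin n → ℝ)) (le_of_lt hij),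
      hvij, sub_self]

private lemma cons_mem_span (n m : ℕ) (src tgt : Fin m → Fin n)
    (U V : Matrix (Fin n) (Fin m) ℝ)
    (hU : ∀ i e, U i e = if src e = i then 1 else 0)
    (hV : ∀ i e, V i e = if tgt e = i then 1 else 0)
    (P : Set (Fin m → ℝ))
    (hP : P = {x | (∀ e, x e = 0 ∨ x e = 1) ∧ U.mulVec x = 1 ∧ V.mulVec x = 1})
    (q : Fin m → ℝ) (hq0 : ∀ e, 0 ≤ q e)
    (hqU : U.mulVec q = 1) (hqV : V.mulVec q = 1) :
    Fin.cons 1 q ∈ Submodule.span ℝ {y : Fin (m+1) → ℝ | ∃ x ∈ P, y = Fin.cons 1 x} := by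
  classical
  set SP := Submodule.span ℝ {y : Fin (m+1) → ℝ | ∃ x ∈ P, y = Fin.cons 1 x} with hSP
  have hUsum : ∀ (q : Fin m → ℝ) (i : Fin n),
      U.mulVec q i = ∑ f ∈ Finset.univ.filter (fun f => src f = i), q f := by
    intro q i
    rw [Finset.sum_filter]
    simp only [Matrix.mulVec, dotProduct, hU]
    apply Finset.sum_congr rfl
    intro f _
    split_ifs with h <;> simp
  have hVsum : ∀ (q : Fin m → ℝ) (i : Fin n),
      V.mulVec q i = ∑ f ∈ Finset.univ.filter (fun f => tgt f = i), q f := by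
    intro q i
    rw [Finset.sum_filter]
    simp only [Matrix.mulVec, dotProduct, hV]
    apply Finset.sum_congr rfl
    intro f _
    split_ifs with h <;> simp
  -- base case helper
  have base : ∀ q : Fin m → ℝ,
      (Finset.univ.filter (fun e => q e ≠ 0 ∧ q e ≠ 1)) = ∅ →
      (∀ e, 0 ≤ q e) → U.mulVec q = 1 → V.mulVec q = 1 → Fin.cons 1 q ∈ SP := by
    intro q hFr hq0 hqU hqV
    have hq01 : ∀ e, q e = 0 ∨ q e = 1 := by
      intro e
      by_contra h
      push_neg at h
      have : e ∈ Finset.univ.filter (fun e => q e ≠ 0 ∧ q e ≠ 1) := by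
        simp [h.1, h.2]
      rw [hFr] at this
      exact absurd this (Finset.notMem_empty e)
    have hqP : q ∈ P := by rw [hP]; exact ⟨hq01, hqU, hqV⟩
    exact Submodule.subset_span ⟨q, hqP, rfl⟩
  suffices key : ∀ N (q : Fin m → ℝ),
      (Finset.univ.filter (fun e => q e ≠ 0 ∧ q e ≠ 1)).card ≤ N →
      (∀ e, 0 ≤ q e) → U.mulVec q = 1 → V.mulVec q = 1 → Fin.cons 1 q ∈ SP by
    exact key _ q le_rfl hq0 hqU hqV
  intro N
  induction N with
  | zero =>
    intro q hcard hq0 hqU hqV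
    exact base q (Finset.card_eq_zero.1 (Nat.le_zero.1 hcard)) hq0 hqU hqV
  | succ N ih =>
    intro q hcard hq0 hqU hqV
    set Fr := Finset.univ.filter (fun e => q e ≠ 0 ∧ q e ≠ 1) with hFrdef
    by_cases hFr : Fr = ∅
    · exact base q hFr hq0 hqU hqV
    · obtain ⟨e₀, he₀⟩ := Finset.nonempty_iff_ne_empty.2 hFr
      -- every fractional coordinate is strictly between 0 and 1
      have hfrac : ∀ e ∈ Fr, 0 < q e ∧ q e < 1 := by
        intro e he
        rw [hFrdef, Finset.mem_filter] at he
        have h0 : 0 < q e := lt_of_le_of_ne (hq0 e) (Ne.symm he.2.1)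
        have hle : q e ≤ 1 := by
          have hmem : e ∈ Finset.univ.filter (fun f => src f = src e) := by simp
          have := Finset.single_le_sum (f := q)
            (fun f _ => hq0 f) hmem
          rw [← hUsum q (src e), hqU] at this
          simpa using this
        exact ⟨h0, lt_of_le_of_ne hle he.2.2⟩
      -- neighbor properties for the fractional support
      have hGp : ∀ e ∈ (↑Fr : Set (Fin m)), ∃ f, f ∈ (↑Fr : Set (Fin m)) ∧ f ≠ e ∧ tgt f = tgt e := by
        intro e he
        rw [Finset.mem_coe] at he
        by_contra hcon
        push_neg at hcon
        -- all other arcs into tgt e are integral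
        have hsum : (1:ℝ) = ∑ f ∈ Finset.univ.filter (fun f => tgt f = tgt e), q f := by
          rw [← hVsum q (tgt e), hqV]; simp
        have hemem : e ∈ Finset.univ.filter (fun f => tgt f = tgt e) := by simp
        rw [← Finset.add_sum_erase _ q hemem] at hsum
        have hint : ∀ f ∈ (Finset.univ.filter (fun f => tgt f = tgt e)).erase e,
            q f = if q f = 1 then (1:ℝ) else 0 := by
          intro f hf
          rw [Finset.mem_erase, Finset.mem_filter] at hf
          have hfFr : f ∉ Fr := by
            intro hfFr
            exact hcon f (Finset.mem_coe.2 hfFr) hf.1 hf.2.2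
          rw [hFrdef, Finset.mem_filter] at hfFr
          push_neg at hfFr
          rcases Classical.em (q f = 0) with h | h
          · rw [h]; norm_num
          · have h1 : q f = 1 := hfFr (Finset.mem_univ f) h
            rw [h1, if_pos rfl]
        rw [Finset.sum_congr rfl hint, Finset.sum_boole] at hsum
        obtain ⟨h0, h1⟩ := hfrac e he
        set k := ((((Finset.univ.filter (fun f => tgt f = tgt e)).erase e)).filter
            (fun f => q f = 1)).card with hk
        rcases Nat.eq_zero_or_pos k with hk0 | hk1
        · rw [hk0] at hsum; push_cast at hsum; linarith
        · have : (1:ℝ) ≤ (k:ℝ) := by exact_mod_cast hk1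
          linarith
      have hHp : ∀ e ∈ (↑Fr : Set (Fin m)), ∃ f, f ∈ (↑Fr : Set (Fin m)) ∧ f ≠ e ∧ src f = src e := by
        intro e he
        rw [Finset.mem_coe] at he
        by_contra hcon
        push_neg at hcon
        have hsum : (1:ℝ) = ∑ f ∈ Finset.univ.filter (fun f => src f = src e), q f := by
          rw [← hUsum q (src e), hqU]; simp
        have hemem : e ∈ Finset.univ.filter (fun f => src f = src e) := by simp
        rw [← Finset.add_sum_erase _ q hemem] at hsum
        have hint : ∀ f ∈ (Finset.univ.filter (fun f => src f = src e)).erase e,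
            q f = if q f = 1 then (1:ℝ) else 0 := by
          intro f hf
          rw [Finset.mem_erase, Finset.mem_filter] at hf
          have hfFr : f ∉ Fr := by
            intro hfFr
            exact hcon f (Finset.mem_coe.2 hfFr) hf.1 hf.2.2
          rw [hFrdef, Finset.mem_filter] at hfFr
          push_neg at hfFr
          rcases Classical.em (q f = 0) with h | h
          · rw [h]; norm_num
          · have h1 : q f = 1 := hfFr (Finset.mem_univ f) h
            rw [h1, if_pos rfl]
        rw [Finset.sum_congr rfl hint, Finset.sum_boole] at hsum
        obtain ⟨h0, h1⟩ := hfrac e he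
        set k := ((((Finset.univ.filter (fun f => src f = src e)).erase e)).filter
            (fun f => q f = 1)).card with hk
        rcases Nat.eq_zero_or_pos k with hk0 | hk1
        · rw [hk0] at hsum; push_cast at hsum; linarith
        · have : (1:ℝ) ≤ (k:ℝ) := by exact_mod_cast hk1
          linarith
      obtain ⟨χ, hχ0, hχsupp, hχU, hχV⟩ := exists_cycle_vector n m src tgt U V hU hV
        (↑Fr) e₀ (Finset.mem_coe.2 he₀) hGp hHp
      have hχsupp' : ∀ e, χ e ≠ 0 → e ∈ Fr := fun e he => Finset.mem_coe.1 (hχsupp e he)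
      -- pushing helper
      have push : ∀ ψ : Fin m → ℝ, ψ ≠ 0 → (∀ e, ψ e ≠ 0 → e ∈ Fr) →
          U.mulVec ψ = 0 → V.mulVec ψ = 0 →
          ∃ lam : ℝ, 0 < lam ∧ Fin.cons 1 (q + lam • ψ) ∈ SP := by
        intro ψ hψ0 hψsupp hψU hψV
        set sχ := Finset.univ.filter (fun e => ψ e ≠ 0) with hsχdef
        have hsne : sχ.Nonempty := by
          rcases Function.ne_iff.1 hψ0 with ⟨e, he⟩
          exact ⟨e, Finset.mem_filter.2 ⟨Finset.mem_univ e, by simpa using he⟩⟩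
        set μ : Fin m → ℝ := fun e => if 0 < ψ e then (1 - q e)/(ψ e) else (q e)/(-(ψ e)) with hμdef
        obtain ⟨es, hes, hesmin⟩ := Finset.exists_min_image sχ μ hsne
        have hessupp : ψ es ≠ 0 := by
          rw [hsχdef, Finset.mem_filter] at hes; exact hes.2
        have hfr : ∀ e ∈ sχ, 0 < q e ∧ q e < 1 := by
          intro e he
          rw [hsχdef, Finset.mem_filter] at he
          exact hfrac e (hψsupp e he.2)
        set lam := μ es with hlamdef
        have hlam : 0 < lam := by
          obtain ⟨h0, h1⟩ := hfr es hes
          rw [show lam = if 0 < ψ es then (1 - q es)/(ψ es) else (q es)/(-(ψ es)) from rfl]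
          rcases lt_trichotomy 0 (ψ es) with h | h | h
          · rw [if_pos h]; exact div_pos (by linarith) h
          · exact absurd h.symm hessupp
          · rw [if_neg (by linarith)]; exact div_pos h0 (by linarith)
        have hbound : ∀ e ∈ sχ, 0 ≤ q e + lam * ψ e ∧ q e + lam * ψ e ≤ 1 := by
          intro e he
          obtain ⟨h0, h1⟩ := hfr e he
          have hle := hesmin e he
          have hψe : ψ e ≠ 0 := by rw [hsχdef, Finset.mem_filter] at he; exact he.2
          rcases lt_trichotomy 0 (ψ e) with h | h | h
          · have : μ e = (1 - q e)/(ψ e) := by rw [hμdef]; exact if_pos h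
            rw [this] at hle
            have : lam * ψ e ≤ 1 - q e := by
              rw [← le_div_iff₀ h]; exact hle
            constructor
            · nlinarith
            · linarith
          · exact absurd h.symm hψe
          · have : μ e = (q e)/(-(ψ e)) := by rw [hμdef]; exact if_neg (by linarith)
            rw [this] at hle
            have : lam * (-(ψ e)) ≤ q e := by
              rw [← le_div_iff₀ (by linarith : (0:ℝ) < -(ψ e))]; exact hle
            constructor
            · linarith
            · nlinarith
        have htight : q es + lam * ψ es = 1 ∨ q es + lam * ψ es = 0 := by
          have hlameq : lam = if 0 < ψ es then (1 - q es)/(ψ es) else (q es)/(-(ψ es)) := rfl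
          rcases lt_trichotomy 0 (ψ es) with h | h | h
          · left; rw [hlameq, if_pos h]; field_simp; ring
          · exact absurd h.symm hessupp
          · right; rw [hlameq, if_neg (by linarith)]
            have h' : (-ψ es) ≠ 0 := by simpa using hessupp
            have h2 : q es / -ψ es * ψ es = -q es := by
              field_simp
            linarith
        set q' := q + lam • ψ with hq'def
        have hq'eq : ∀ e, e ∉ sχ → q' e = q e := by
          intro e he
          rw [hsχdef, Finset.mem_filter] at he
          push_neg at he
          have : ψ e = 0 := he (Finset.mem_univ e)
          simp [hq'def, this]
        have hq'0 : ∀ e, 0 ≤ q' e := by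
          intro e
          by_cases he : e ∈ sχ
          · exact (hbound e he).1
          · rw [hq'eq e he]; exact hq0 e
        have hq'U : U.mulVec q' = 1 := by
          rw [hq'def, Matrix.mulVec_add, Matrix.mulVec_smul, hψU, hqU]
          simp
        have hq'V : V.mulVec q' = 1 := by
          rw [hq'def, Matrix.mulVec_add, Matrix.mulVec_smul, hψV, hqV]
          simp
        have hesFr : es ∈ Fr := hψsupp es hessupp
        have hes01 : q' es = 1 ∨ q' es = 0 := by
          have : q' es = q es + lam * ψ es := by simp [hq'def]
          rw [this]; exact htight
        have hsub : (Finset.univ.filter (fun e => q' e ≠ 0 ∧ q' e ≠ 1)) ⊆ Fr.erase es := by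
          intro e he
          rw [Finset.mem_filter] at he
          rw [Finset.mem_erase]
          have hne : e ≠ es := by
            intro heq
            subst heq
            rcases hes01 with h | h
            · exact he.2.2 h
            · exact he.2.1 h
          refine ⟨hne, ?_⟩
          by_cases hesχ : e ∈ sχ
          · rw [hsχdef, Finset.mem_filter] at hesχ
            exact hψsupp e hesχ.2
          · rw [hFrdef, Finset.mem_filter]
            rw [hq'eq e hesχ] at he
            exact ⟨Finset.mem_univ e, he.2⟩
        have hcard' : (Finset.univ.filter (fun e => q' e ≠ 0 ∧ q' e ≠ 1)).card ≤ N := by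
          have h1 := Finset.card_le_card hsub
          rw [Finset.card_erase_of_mem hesFr] at h1
          omega
        exact ⟨lam, hlam, ih q' hcard' hq'0 hq'U hq'V⟩
      obtain ⟨a, ha, hqa⟩ := push χ hχ0 hχsupp' hχU hχV
      have hnχ0 : (-χ : Fin m → ℝ) ≠ 0 := neg_ne_zero.2 hχ0
      have hnχsupp : ∀ e, (-χ : Fin m → ℝ) e ≠ 0 → e ∈ Fr := by
        intro e he
        apply hχsupp'
        simpa using he
      have hnχU : U.mulVec (-χ) = 0 := by rw [Matrix.mulVec_neg, hχU]; simp
      have hnχV : V.mulVec (-χ) = 0 := by rw [Matrix.mulVec_neg, hχV]; simp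
      obtain ⟨b, hb, hqb⟩ := push (-χ) hnχ0 hnχsupp hnχU hnχV
      have hab : 0 < a + b := by linarith
      have hsum : (a + b) • (Fin.cons 1 q : Fin (m+1) → ℝ) =
          b • (Fin.cons 1 (q + a • χ) : Fin (m+1) → ℝ)
          + a • (Fin.cons 1 (q + b • (-χ)) : Fin (m+1) → ℝ) := by
        funext i
        refine Fin.cases ?_ ?_ i
        · simp only [Pi.add_apply, Pi.smul_apply, Fin.cons_zero, smul_eq_mul]
          ring
        · intro e
          simp only [Pi.add_apply, Pi.smul_apply, Fin.cons_succ, smul_eq_mul,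
            Pi.neg_apply]
          ring
      have hfinal : (Fin.cons 1 q : Fin (m+1) → ℝ) =
          (a + b)⁻¹ • (b • (Fin.cons 1 (q + a • χ) : Fin (m+1) → ℝ)
          + a • (Fin.cons 1 (q + b • (-χ)) : Fin (m+1) → ℝ)) := by
        rw [← hsum, smul_smul, inv_mul_cancel₀ (ne_of_gt hab), one_smul]
      rw [hfinal]
      exact Submodule.smul_mem _ _ (Submodule.add_mem _
        (Submodule.smul_mem _ _ hqa) (Submodule.smul_mem _ _ hqb))

private lemma dot_sum_fun {ι κ' : Type*} [Fintype κ'] (s : Finset ι) (g : ι → κ' → ℝ) (y : κ' → ℝ) :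
    dotProduct y (∑ v ∈ s, g v) = ∑ v ∈ s, dotProduct y (g v) := by
  simp only [dotProduct, Finset.sum_apply, Finset.mul_sum]
  exact Finset.sum_comm

/-- assuming `P ≠ ∅` and that every arc is used by some cycle cover, if the
columns of `W` form a basis of `R = Nul([-1ₙ, U; -1ₙ, V])`, then there exists a positive
definite `Z` with `diag(W Z Wᵀ) = W Z Wᵀ e₀` and `e₀ᵀ W Z Wᵀ e₀ = 1`; that is, the
facially reduced relaxation `(SDP_{S1})` has a Slater feasible point. -/
theorem slater_point_exists
    (n m : ℕ) (src tgt : Fin m → Fin n)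
    (h_simple : ∀ e f : Fin m, src e = src f → tgt e = tgt f → e = f)
    (h_noloop : ∀ e : Fin m, src e ≠ tgt e)
    (U V : Matrix (Fin n) (Fin m) ℝ)
    (hU : ∀ i e, U i e = if src e = i then 1 else 0)
    (hV : ∀ i e, V i e = if tgt e = i then 1 else 0)
    (P : Set (Fin m → ℝ))
    (hP : P = {x | (∀ e, x e = 0 ∨ x e = 1) ∧ U.mulVec x = 1 ∧ V.mulVec x = 1})
    (hPne : P.Nonempty)
    (hused : ∀ e : Fin m, ∃ x ∈ P, x e = 1)
    (α : ℕ) (hα : α = (Matrix.fromRows U V).rank)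
    (B : Matrix (Fin n ⊕ Fin n) (Fin (m + 1)) ℝ)
    (hBu : ∀ i, B (Sum.inl i) = Fin.cons (-1) (U i))
    (hBv : ∀ i, B (Sum.inr i) = Fin.cons (-1) (V i))
    (W : Matrix (Fin (m + 1)) (Fin (m + 1 - α)) ℝ)
    (hWli : LinearIndependent ℝ (fun j (i : Fin (m + 1)) => W i j))
    (hWspan : Submodule.span ℝ (Set.range fun j (i : Fin (m + 1)) => W i j)
        = LinearMap.ker B.mulVecLin) :
    ∃ Z : Matrix (Fin (m + 1 - α)) (Fin (m + 1 - α)) ℝ, Z.PosDef ∧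
      (W * Z * Wᵀ).diag = (W * Z * Wᵀ).mulVec (Pi.single 0 1) ∧
      Pi.single (0 : Fin (m + 1)) (1 : ℝ) ⬝ᵥ (W * Z * Wᵀ).mulVec (Pi.single 0 1) = 1 := by
  classical
  set S := Submodule.span ℝ {y : Fin (m+1) → ℝ | ∃ x ∈ P, y = Fin.cons 1 x} with hSdef
  -- row computations of B
  have hBl : ∀ (c : ℝ) (u : Fin m → ℝ) (i : Fin n),
      B.mulVec (Fin.cons c u) (Sum.inl i) = -c + U.mulVec u i := by
    intro c u i
    show B (Sum.inl i) ⬝ᵥ Fin.cons c u = _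
    rw [hBu i]
    show Matrix.vecCons (-1 : ℝ) (U i) ⬝ᵥ Matrix.vecCons c u = _
    rw [Matrix.cons_dotProduct, Matrix.head_cons, Matrix.tail_cons, neg_one_mul]
    rfl
  have hBr : ∀ (c : ℝ) (u : Fin m → ℝ) (i : Fin n),
      B.mulVec (Fin.cons c u) (Sum.inr i) = -c + V.mulVec u i := by
    intro c u i
    show B (Sum.inr i) ⬝ᵥ Fin.cons c u = _
    rw [hBv i]
    show Matrix.vecCons (-1 : ℝ) (V i) ⬝ᵥ Matrix.vecCons c u = _
    rw [Matrix.cons_dotProduct, Matrix.head_cons, Matrix.tail_cons, neg_one_mul]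
    rfl
  -- S ≤ ker B
  have hSK : S ≤ LinearMap.ker B.mulVecLin := by
    rw [hSdef, Submodule.span_le]
    rintro y ⟨x, hx, rfl⟩
    rw [SetLike.mem_coe, LinearMap.mem_ker, Matrix.mulVecLin_apply]
    have hx' := hx
    rw [hP] at hx'
    obtain ⟨hx01, hxU, hxV⟩ := hx'
    funext i
    rcases i with i | i
    · rw [hBl, hxU]; simp
    · rw [hBr, hxV]; simp
  -- ker B ≤ S
  have hKS : LinearMap.ker B.mulVecLin ≤ S := by
    intro y hy
    rw [LinearMap.mem_ker, Matrix.mulVecLin_apply] at hy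
    set t := y 0 with htdef
    set z : Fin m → ℝ := fun e => y e.succ with hzdef
    have hyz : y = Fin.cons t z := by
      funext i
      refine Fin.cases ?_ ?_ i
      · rw [Fin.cons_zero]
      · intro e; rw [Fin.cons_succ]
    have hUz : U.mulVec z = fun _ => t := by
      funext i
      have h := congrFun hy (Sum.inl i)
      rw [hyz, hBl] at h
      rw [Pi.zero_apply] at h
      linarith
    have hVz : V.mulVec z = fun _ => t := by
      funext i
      have h := congrFun hy (Sum.inr i)
      rw [hyz, hBr] at h
      rw [Pi.zero_apply] at h
      linarith
    obtain ⟨x₀, hx₀⟩ := hPne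
    have hx₀' := hx₀
    rw [hP] at hx₀'
    obtain ⟨hx₀01, hx₀U, hx₀V⟩ := hx₀'
    set w : Fin m → ℝ := fun e => z e - t * x₀ e with hwdef
    have hweq : w = z - t • x₀ := by funext e; simp [hwdef]
    have hUw : U.mulVec w = 0 := by
      rw [hweq, Matrix.mulVec_sub, Matrix.mulVec_smul, hUz, hx₀U]
      funext i; simp
    have hVw : V.mulVec w = 0 := by
      rw [hweq, Matrix.mulVec_sub, Matrix.mulVec_smul, hVz, hx₀V]
      funext i; simp
    have hw : Fin.cons (0:ℝ) w ∈ S := by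
      rcases Nat.eq_zero_or_pos m with hm | hm
      · have hzero : (Fin.cons (0:ℝ) w : Fin (m+1) → ℝ) = 0 := by
          funext i
          refine Fin.cases ?_ ?_ i
          · rw [Fin.cons_zero]; rfl
          · intro e; exact absurd e.isLt (by omega)
        rw [hzero]; exact Submodule.zero_mem _
      · -- strictly positive feasible point
        choose xc hxcP hxc1 using hused
        have hcov : ∀ f, (∀ e, 0 ≤ xc f e) ∧ U.mulVec (xc f) = 1 ∧ V.mulVec (xc f) = 1 := by
          intro f
          have h := hxcP f
          rw [hP] at h
          refine ⟨fun e => ?_, h.2.1, h.2.2⟩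
          rcases h.1 e with h' | h' <;> rw [h'] <;> norm_num
        set xs : Fin m → ℝ := fun e => (m:ℝ)⁻¹ * ∑ f, xc f e with hxsdef
        have hm0 : (0:ℝ) < m := by exact_mod_cast hm
        have hxslb : ∀ e, (m:ℝ)⁻¹ ≤ xs e := by
          intro e
          have hle : (1:ℝ) ≤ ∑ f, xc f e := by
            calc (1:ℝ) = xc e e := (hxc1 e).symm
            _ ≤ ∑ f, xc f e :=
              Finset.single_le_sum (fun f _ => (hcov f).1 e) (Finset.mem_univ e)
          calc (m:ℝ)⁻¹ = (m:ℝ)⁻¹ * 1 := by ring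
          _ ≤ (m:ℝ)⁻¹ * ∑ f, xc f e := by
              apply mul_le_mul_of_nonneg_left hle (by positivity)
        have hxs2 : xs = (m:ℝ)⁻¹ • ∑ f, xc f := by
          funext e; simp [hxsdef, Finset.sum_apply]
        have hxsU : U.mulVec xs = 1 := by
          rw [hxs2, Matrix.mulVec_smul, ← Matrix.mulVecLin_apply, map_sum]
          simp only [Matrix.mulVecLin_apply]
          rw [Finset.sum_congr rfl (fun f _ => (hcov f).2.1)]
          funext i
          simp [Finset.sum_apply]
          field_simp
        have hxsV : V.mulVec xs = 1 := by
          rw [hxs2, Matrix.mulVec_smul, ← Matrix.mulVecLin_apply, map_sum]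
          simp only [Matrix.mulVecLin_apply]
          rw [Finset.sum_congr rfl (fun f _ => (hcov f).2.2)]
          funext i
          simp [Finset.sum_apply]
          field_simp
        set T := ∑ e, |w e| with hTdef
        have hT0 : 0 ≤ T := Finset.sum_nonneg (fun e _ => abs_nonneg _)
        set ε : ℝ := (((m:ℝ)+1) * (1 + T))⁻¹ with hεdef
        have hε : 0 < ε := by rw [hεdef]; positivity
        have hbnd : ∀ e, ε * |w e| ≤ (m:ℝ)⁻¹ := by
          intro e
          have h1 : |w e| ≤ T :=
            Finset.single_le_sum (fun f _ => abs_nonneg (w f)) (Finset.mem_univ e)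
          have h2 : ε * |w e| ≤ ε * (1 + T) := by
            apply mul_le_mul_of_nonneg_left (by linarith) hε.le
          have h3 : ε * (1 + T) = ((m:ℝ)+1)⁻¹ := by
            rw [hεdef]
            field_simp
          have h4 : ((m:ℝ)+1)⁻¹ ≤ (m:ℝ)⁻¹ := by
            apply inv_anti₀ hm0 (by linarith)
          linarith
        have happly : ∀ s : ℝ, |s| = 1 →
            Fin.cons (1:ℝ) (fun e => xs e + (s * ε) * w e) ∈ S := by
          intro s hs
          rw [hSdef]
          apply cons_mem_span n m src tgt U V hU hV P hP
          · intro e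
            have hb := hbnd e
            have hlb := hxslb e
            have habs : |(s * ε) * w e| = ε * |w e| := by
              rw [abs_mul, abs_mul, hs, one_mul, abs_of_pos hε]
            have := neg_abs_le ((s * ε) * w e)
            linarith
          · have heq : (fun e => xs e + (s * ε) * w e) = xs + (s * ε) • w := by
              funext e; simp
            rw [heq, Matrix.mulVec_add, Matrix.mulVec_smul, hUw, hxsU]
            simp
          · have heq : (fun e => xs e + (s * ε) * w e) = xs + (s * ε) • w := by
              funext e; simp
            rw [heq, Matrix.mulVec_add, Matrix.mulVec_smul, hVw, hxsV]
            simp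
        have hPp := happly 1 (by norm_num)
        have hPm := happly (-1) (by norm_num)
        have hcomb : (Fin.cons (0:ℝ) w : Fin (m+1) → ℝ) =
            (2*ε)⁻¹ • ((Fin.cons (1:ℝ) (fun e => xs e + (1 * ε) * w e) : Fin (m+1) → ℝ)
              - (Fin.cons (1:ℝ) (fun e => xs e + ((-1) * ε) * w e) : Fin (m+1) → ℝ)) := by
          funext i
          refine Fin.cases ?_ ?_ i
          · simp
          · intro e
            simp only [Pi.smul_apply, Pi.sub_apply, Fin.cons_succ, smul_eq_mul, Fin.cons_zero]
            field_simp
            ring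
        rw [hcomb]
        exact Submodule.smul_mem _ _ (Submodule.sub_mem _ hPp hPm)
    have hteq : y = t • (Fin.cons (1:ℝ) x₀ : Fin (m+1) → ℝ) + Fin.cons (0:ℝ) w := by
      funext i
      refine Fin.cases ?_ ?_ i
      · simp [Fin.cons_zero, htdef]
      · intro e
        simp only [Pi.add_apply, Pi.smul_apply, Fin.cons_succ, smul_eq_mul, hwdef]
        ring
    rw [hteq]
    exact Submodule.add_mem _
      (Submodule.smul_mem _ _ (Submodule.subset_span ⟨x₀, hx₀, rfl⟩)) hw
  have hSker : S = LinearMap.ker B.mulVecLin := le_antisymm hSK hKS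
  -- range of W equals ker B
  have hrange : LinearMap.range W.mulVecLin = LinearMap.ker B.mulVecLin := by
    rw [Matrix.range_mulVecLin, ← hWspan]
    rfl
  -- W injective
  have hWinj : Function.Injective W.mulVecLin := by
    rw [← LinearMap.ker_eq_bot, LinearMap.ker_eq_bot']
    intro c hc
    funext j
    refine Fintype.linearIndependent_iff.1 hWli c ?_ j
    funext i
    rw [Finset.sum_apply]
    have h := congrFun hc i
    simp only [Matrix.mulVecLin_apply] at h
    rw [Pi.zero_apply] at h ⊢
    rw [← h]
    simp [Matrix.mulVec, dotProduct, mul_comm]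
  -- finite spanning family inside the cycle-cover vectors
  obtain ⟨b, hbsub, hbspan, hbli⟩ :=
    exists_linearIndependent ℝ {y : Fin (m+1) → ℝ | ∃ x ∈ P, y = Fin.cons 1 x}
  have hbK : Submodule.span ℝ b = LinearMap.ker B.mulVecLin := by
    rw [hbspan, ← hSdef, hSker]
  have hbfin : b.Finite := hbli.setFinite
  set NN := hbfin.toFinset with hNNdef
  have hmemNN : ∀ v, v ∈ NN ↔ v ∈ b := fun v => hbfin.mem_toFinset
  -- coordinates
  have hbrange : ∀ v, v ∈ b → ∃ c, W.mulVec c = v := by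
    intro v hv
    have hvK : v ∈ LinearMap.ker B.mulVecLin := by
      rw [← hbK]; exact Submodule.subset_span hv
    rw [← hrange] at hvK
    obtain ⟨c, hc⟩ := hvK
    exact ⟨c, hc⟩
  choose! cf hcf using hbrange
  -- properties of the vectors in b
  have hb0 : ∀ v ∈ b, v 0 = 1 := by
    rintro v hv
    obtain ⟨x, hx, rfl⟩ := hbsub hv
    rw [Fin.cons_zero]
  have hbsq : ∀ v ∈ b, ∀ i, v i * v i = v i := by
    rintro v hv i
    obtain ⟨x, hxP, rfl⟩ := hbsub hv
    refine Fin.cases ?_ ?_ i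
    · rw [Fin.cons_zero]; norm_num
    · intro e
      rw [Fin.cons_succ]
      rw [hP] at hxP
      rcases hxP.1 e with h | h <;> rw [h] <;> norm_num
  -- NN is nonempty
  obtain ⟨x₀, hx₀⟩ := hPne
  have hNNne : NN.Nonempty := by
    rw [Finset.nonempty_iff_ne_empty]
    intro hemp
    have hbempty : b = ∅ := Set.Finite.toFinset_eq_empty.mp hemp
    have hmem : Fin.cons (1:ℝ) x₀ ∈ LinearMap.ker B.mulVecLin := by
      rw [← hSker, hSdef]
      exact Submodule.subset_span ⟨x₀, hx₀, rfl⟩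
    rw [← hbK, hbempty, Submodule.span_empty, Submodule.mem_bot] at hmem
    have := congrFun hmem 0
    rw [Fin.cons_zero, Pi.zero_apply] at this
    norm_num at this
  have hcard0 : (0:ℝ) < (NN.card : ℝ) := by
    exact_mod_cast Finset.card_pos.2 hNNne
  set κ : ℝ := ((NN.card : ℝ))⁻¹ with hκdef
  have hκ : 0 < κ := by rw [hκdef]; positivity
  set Z : Matrix (Fin (m+1-α)) (Fin (m+1-α)) ℝ :=
    κ • ∑ v ∈ NN, Matrix.of (fun i j => cf v i * cf v j) with hZdef
  have hcf' : ∀ v ∈ NN, W.mulVec (cf v) = v := by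
    intro v hv
    exact hcf v ((hmemNN v).1 hv)
  have hZ : ∀ k l, Z k l = κ * ∑ v ∈ NN, cf v k * cf v l := by
    intro k l
    rw [hZdef]
    simp [Matrix.sum_apply]
  -- the matrix X = W Z Wᵀ
  have hXmat : W * Z * Wᵀ = κ • ∑ v ∈ NN, Matrix.of (fun i j => v i * v j) := by
    rw [hZdef, Matrix.mul_smul, Matrix.smul_mul, Matrix.mul_sum, Matrix.sum_mul]
    congr 1
    apply Finset.sum_congr rfl
    intro v hv
    ext i j
    rw [Matrix.mul_apply, Matrix.of_apply]
    have hWM : ∀ l, (W * Matrix.of (fun k l => cf v k * cf v l)) i l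
        = (W.mulVec (cf v) i) * cf v l := by
      intro l
      rw [Matrix.mul_apply]
      rw [show (W.mulVec (cf v) i) = ∑ k, W i k * cf v k from rfl, Finset.sum_mul]
      apply Finset.sum_congr rfl
      intro k _
      rw [Matrix.of_apply]
      ring
    calc ∑ l, (W * Matrix.of (fun k l => cf v k * cf v l)) i l * Wᵀ l j
        = ∑ l, (W.mulVec (cf v) i) * (cf v l * W j l) := by
          apply Finset.sum_congr rfl
          intro l _
          rw [hWM, Matrix.transpose_apply]
          ring
      _ = (W.mulVec (cf v) i) * ∑ l, W j l * cf v l := by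
          rw [Finset.mul_sum]
          apply Finset.sum_congr rfl
          intro l _
          ring
      _ = (W.mulVec (cf v) i) * (W.mulVec (cf v) j) := rfl
      _ = v i * v j := by rw [hcf' v hv]
  have hXentry : ∀ i j, (W * Z * Wᵀ) i j = κ * ∑ v ∈ NN, v i * v j := by
    intro i j
    rw [hXmat]
    simp [Matrix.sum_apply]
  -- Hermitian
  have hherm : Zᴴ = Z := by
    ext i j
    rw [Matrix.conjTranspose_apply, hZ, hZ]
    rw [star_trivial]
    congr 1
    apply Finset.sum_congr rfl
    intro v _
    ring
  -- quadratic form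
  have hZquad : ∀ y : Fin (m+1-α) → ℝ,
      dotProduct y (Z.mulVec y) = κ * ∑ v ∈ NN, (dotProduct (cf v) y)^2 := by
    intro y
    have hMv : ∀ v, (Matrix.of (fun k l => cf v k * cf v l)).mulVec y
        = fun k => cf v k * (dotProduct (cf v) y) := by
      intro v
      funext k
      simp only [Matrix.mulVec, dotProduct, Matrix.of_apply]
      rw [Finset.mul_sum]
      apply Finset.sum_congr rfl
      intro l _
      ring
    have hZy : Z.mulVec y = κ • ∑ v ∈ NN, (fun k => cf v k * (dotProduct (cf v) y)) := by
      rw [hZdef, Matrix.smul_mulVec]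
      congr 1
      have hsum : (∑ v ∈ NN, Matrix.of (fun k l => cf v k * cf v l)).mulVec y
          = ∑ v ∈ NN, (Matrix.of (fun k l => cf v k * cf v l)).mulVec y := by
        funext k
        simp only [Matrix.mulVec, dotProduct, Matrix.sum_apply, Finset.sum_apply,
          Finset.sum_mul]
        exact Finset.sum_comm
      rw [hsum]
      apply Finset.sum_congr rfl
      intro v _
      rw [hMv]
    rw [hZy, dotProduct_smul, dot_sum_fun, smul_eq_mul]
    congr 1
    apply Finset.sum_congr rfl
    intro v _
    simp only [dotProduct]
    rw [sq, Finset.sum_mul]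
    apply Finset.sum_congr rfl
    intro k _
    ring
  clear_value Z
  clear hZdef
  refine ⟨Z, Matrix.PosDef.of_dotProduct_mulVec_pos hherm ?_, ?_, ?_⟩
  · -- positive definiteness
    intro y hy
    have hstar : (star y : Fin (m+1-α) → ℝ) = y := by
      funext k; simp
    rw [hstar, hZquad]
    -- strict positivity
    have hex : ∃ v ∈ NN, dotProduct (cf v) y ≠ 0 := by
      by_contra hall
      push_neg at hall
      apply hy
      have hspanTop : Submodule.span ℝ (cf '' b) = ⊤ := by
        apply Submodule.map_injective_of_injective hWinj
        rw [Submodule.map_span, Submodule.map_top]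
        have himg : W.mulVecLin '' (cf '' b) = b := by
          rw [Set.image_image]
          have heq : ∀ v ∈ b, W.mulVecLin (cf v) = v := fun v hv => hcf v hv
          exact (Set.image_congr heq).trans (Set.image_id b)
        rw [himg, hbK, hrange]
      set φ : (Fin (m+1-α) → ℝ) →ₗ[ℝ] ℝ :=
        { toFun := fun u => dotProduct u y,
          map_add' := fun a b => add_dotProduct a b y,
          map_smul' := fun c a => smul_dotProduct c a y } with hφdef
      have hker : (⊤ : Submodule ℝ (Fin (m+1-α) → ℝ)) ≤ LinearMap.ker φ := by
        rw [← hspanTop]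
        rw [Submodule.span_le]
        rintro u ⟨v, hv, rfl⟩
        rw [SetLike.mem_coe, LinearMap.mem_ker]
        exact hall v ((hmemNN v).2 hv)
      funext k
      have hk := hker (Submodule.mem_top : Pi.single k 1 ∈ ⊤)
      rw [LinearMap.mem_ker] at hk
      have hk2 : dotProduct (Pi.single k 1) y = 0 := hk
      rw [single_dotProduct, one_mul] at hk2
      simpa using hk2
    obtain ⟨v₀, hv₀, hv₀ne⟩ := hex
    have hsumpos : (0:ℝ) < ∑ v ∈ NN, (dotProduct (cf v) y)^2 := by
      have hle : (dotProduct (cf v₀) y)^2 ≤ ∑ v ∈ NN, (dotProduct (cf v) y)^2 :=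
        Finset.single_le_sum (f := fun v => (dotProduct (cf v) y)^2)
          (fun v _ => sq_nonneg _) hv₀
      have : (0:ℝ) < (dotProduct (cf v₀) y)^2 := by positivity
      linarith
    exact mul_pos hκ hsumpos
  · -- diag equality
    funext i
    rw [Matrix.diag_apply, Matrix.mulVec_single]
    show (W * Z * Wᵀ) i i = (W * Z * Wᵀ) i 0 * 1
    rw [hXentry, hXentry, mul_one]
    congr 1
    apply Finset.sum_congr rfl
    intro v hv
    rw [hbsq v ((hmemNN v).1 hv) i, hb0 v ((hmemNN v).1 hv), mul_one]
  · -- normalization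
    have hone : ∑ v ∈ NN, v 0 * v 0 = (NN.card : ℝ) := by
      calc ∑ v ∈ NN, v 0 * v 0 = ∑ _v ∈ NN, (1:ℝ) :=
            Finset.sum_congr rfl (fun v hv => by
              rw [hb0 v ((hmemNN v).1 hv)]; norm_num)
      _ = (NN.card : ℝ) := by rw [Finset.sum_const, nsmul_eq_mul, mul_one]
    rw [Matrix.mulVec_single, single_dotProduct, one_mul]
    show (W * Z * Wᵀ) 0 0 * 1 = 1
    rw [mul_one, hXentry, hone, hκdef]
    exact inv_mul_cancel₀ (ne_of_gt hcard0)
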